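/- If x is irrational and |x − p/q| < 1/(2q²) with q > 0, then p/q is a convergent of the continued fraction expansion of x. -/

import Mathlib

/-- Gauss map iterates of `x`: `y₀ = {x}`, `y_{n+1} = {1/y_n}`. -/
noncomputable def gIter (x : ℝ) : ℕ → ℝ
  | 0 => Int.fract x
  | n + 1 => Int.fract (1 / gIter x n)

/-- Partial quotients of the continued fraction of `x`. -/
noncomputable def cfa (x : ℝ) : ℕ → ℤ
  | 0 => ⌊x⌋
  | n + 1 => ⌊1 / gIter x n⌋

/-- Numerators of the convergents of `x`. -/
noncomputable def cfp (x : ℝ) : ℕ → ℤ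
  | 0 => cfa x 0
  | 1 => cfa x 1 * cfa x 0 + 1
  | n + 2 => cfa x (n + 2) * cfp x (n + 1) + cfp x n

/-- Denominators of the convergents of `x`. -/
noncomputable def cfq (x : ℝ) : ℕ → ℤ
  | 0 => 1
  | 1 => cfa x 1
  | n + 2 => cfa x (n + 2) * cfq x (n + 1) + cfq x n

lemma gIter_shift (x : ℝ) : ∀ n, gIter x (n + 1) = gIter (1 / Int.fract x) n
  | 0 => by simp [gIter]
  | n + 1 => by
    show Int.fract (1 / gIter x (n+1)) = Int.fract (1 / gIter (1/Int.fract x) n)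
    rw [gIter_shift x n]

lemma cfa_shift (x : ℝ) : ∀ n, cfa x (n + 1) = cfa (1 / Int.fract x) n
  | 0 => by simp [cfa, gIter]
  | n + 1 => by
    show ⌊1 / gIter x (n+1)⌋ = ⌊1 / gIter (1/Int.fract x) n⌋
    rw [gIter_shift x n]

lemma cfpq_shift (x : ℝ) : ∀ n, cfq x (n + 1) = cfp (1 / Int.fract x) n ∧
    cfp x (n + 1) = cfa x 0 * cfp (1 / Int.fract x) n + cfq (1 / Int.fract x) n
  | 0 => by
    constructor
    · show cfa x 1 = cfa (1/Int.fract x) 0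
      exact cfa_shift x 0
    · show cfa x 1 * cfa x 0 + 1 = cfa x 0 * cfa (1/Int.fract x) 0 + 1
      rw [cfa_shift x 0]; ring
  | 1 => by
    constructor
    · show cfa x 2 * cfq x 1 + cfq x 0 = cfa (1/Int.fract x) 1 * cfa (1/Int.fract x) 0 + 1
      rw [cfa_shift x 1]
      show _ * cfa x 1 + 1 = _
      rw [cfa_shift x 0]
    · show cfa x 2 * cfp x 1 + cfp x 0 = cfa x 0 * (cfa (1/Int.fract x) 1 * cfa (1/Int.fract x) 0 + 1) + cfa (1/Int.fract x) 1
      rw [cfa_shift x 1]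
      show _ * (cfa x 1 * cfa x 0 + 1) + cfa x 0 = _
      rw [cfa_shift x 0]; ring
  | n + 2 => by
    obtain ⟨h1, h2⟩ := cfpq_shift x n
    obtain ⟨h1', h2'⟩ := cfpq_shift x (n + 1)
    constructor
    · show cfa x (n+3) * cfq x (n+2) + cfq x (n+1) =
        cfa (1/Int.fract x) (n+2) * cfp (1/Int.fract x) (n+1) + cfp (1/Int.fract x) n
      rw [cfa_shift x (n+2), h1, h1']
    · show cfa x (n+3) * cfp x (n+2) + cfp x (n+1) = cfa x 0 *
        (cfa (1/Int.fract x) (n+2) * cfp (1/Int.fract x) (n+1) + cfp (1/Int.fract x) n) +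
        (cfa (1/Int.fract x) (n+2) * cfq (1/Int.fract x) (n+1) + cfq (1/Int.fract x) n)
      rw [cfa_shift x (n+2), h2, h2']; ring

lemma irr_fract {x : ℝ} (hx : Irrational x) : Irrational (Int.fract x) := by
  rw [Int.fract]; exact hx.sub_intCast _

lemma fract_pos_of_irr {x : ℝ} (hx : Irrational x) : 0 < Int.fract x :=
  lt_of_le_of_ne (Int.fract_nonneg x)
    (fun h => (irr_fract hx).ne_int 0 (by exact_mod_cast h.symm))

lemma gIter_mem (x : ℝ) (hx : Irrational x) :
    ∀ n, Irrational (gIter x n) ∧ 0 < gIter x n ∧ gIter x n < 1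
  | 0 => ⟨irr_fract hx, fract_pos_of_irr hx, Int.fract_lt_one x⟩
  | n + 1 => by
    obtain ⟨hirr, h0, h1⟩ := gIter_mem x hx n
    have hinv : Irrational (1 / gIter x n) := by rw [one_div]; exact hirr.inv
    exact ⟨irr_fract hinv, fract_pos_of_irr hinv, Int.fract_lt_one _⟩

lemma cfa_pos (x : ℝ) (hx : Irrational x) (n : ℕ) : 1 ≤ cfa x (n + 1) := by
  obtain ⟨_, h0, h1⟩ := gIter_mem x hx n
  show (1 : ℤ) ≤ ⌊1 / gIter x n⌋
  rw [Int.le_floor]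
  push_cast
  rw [le_div_iff₀ h0, one_mul]
  exact h1.le

lemma cfa_zero_pos (x : ℝ) (hx : 1 < x) : 1 ≤ cfa x 0 := by
  show (1:ℤ) ≤ ⌊x⌋
  rw [Int.le_floor]; exact_mod_cast hx.le

lemma cfp_pos (x : ℝ) (hx : Irrational x) (hx1 : 1 < x) : ∀ n, 1 ≤ cfp x n
  | 0 => cfa_zero_pos x hx1
  | 1 => by
    show (1:ℤ) ≤ cfa x 1 * cfa x 0 + 1
    nlinarith [cfa_pos x hx 0, cfa_zero_pos x hx1]
  | n + 2 => by
    show (1:ℤ) ≤ cfa x (n+2) * cfp x (n+1) + cfp x n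
    nlinarith [cfa_pos x hx (n + 1), cfp_pos x hx hx1 n, cfp_pos x hx hx1 (n + 1)]

lemma cfq_pos (x : ℝ) (hx : Irrational x) : ∀ n, 1 ≤ cfq x n
  | 0 => le_refl 1
  | 1 => cfa_pos x hx 0
  | n + 2 => by
    show (1:ℤ) ≤ cfa x (n+2) * cfq x (n+1) + cfq x n
    nlinarith [cfa_pos x hx (n + 1), cfq_pos x hx n, cfq_pos x hx (n + 1)]

lemma conv_eq (n : ℕ) : ∀ x : ℝ, Irrational x →
    ((Real.convergent x n : ℚ) : ℝ) = (cfp x n : ℝ) / (cfq x n : ℝ) := by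
  induction n with
  | zero =>
    intro x hx
    rw [Real.convergent_zero]
    show _ = ((cfa x 0 : ℤ) : ℝ) / ((1 : ℤ) : ℝ)
    push_cast; simp [cfa]
  | succ n ih =>
    intro x hx
    have hf : Irrational (Int.fract x) := irr_fract hx
    have hf0 : 0 < Int.fract x := fract_pos_of_irr hx
    have hy : Irrational (1 / Int.fract x) := by rw [one_div]; exact hf.inv
    have hy1 : 1 < 1 / Int.fract x := by
      rw [lt_div_iff₀ hf0, one_mul]; exact Int.fract_lt_one x
    have hp := cfp_pos _ hy hy1 n
    have hq := cfq_pos _ hy n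
    have hp0 : ((cfp (1 / Int.fract x) n : ℝ)) ≠ 0 := by
      have : (0:ℝ) < (cfp (1 / Int.fract x) n : ℝ) := by exact_mod_cast lt_of_lt_of_le zero_lt_one hp
      exact this.ne'
    have key : ((Real.convergent (Int.fract x)⁻¹ n : ℚ) : ℝ)
        = (cfp (1/Int.fract x) n : ℝ) / (cfq (1/Int.fract x) n : ℝ) := by
      rw [inv_eq_one_div]; exact ih _ hy
    rw [Real.convergent_succ]
    push_cast
    rw [key, (cfpq_shift x n).1, (cfpq_shift x n).2, inv_div]
    have hcfa : cfa x 0 = ⌊x⌋ := rfl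
    rw [hcfa]
    push_cast
    field_simp

/-- If `|ξ - P/Q| < 1/(2Q²)` then `P/Q` is a convergent of `ξ`. -/
theorem stmt10 (ξ : ℝ) (hξ : Irrational ξ) (P Q : ℤ) (hQ : 0 < Q)
    (h : |ξ - (P : ℝ) / (Q : ℝ)| < 1 / (2 * (Q : ℝ) ^ 2)) :
    ∃ n : ℕ, (P : ℝ) / (Q : ℝ) = (cfp ξ n : ℝ) / (cfq ξ n : ℝ) := by
  set q : ℚ := (P : ℚ) / (Q : ℚ) with hqdef
  have hcast : ((q : ℚ) : ℝ) = (P : ℝ) / (Q : ℝ) := by rw [hqdef]; push_cast; ring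
  have hden : ((q.den : ℤ)) ≤ Q := by
    have hdvd : ((q.den : ℤ)) ∣ Q := by
      rw [hqdef, ← Rat.divInt_eq_div]
      exact Rat.den_dvd P Q
    exact Int.le_of_dvd hQ hdvd
  have hden' : ((q.den : ℝ)) ≤ (Q : ℝ) := by exact_mod_cast hden
  have hdenpos : (0:ℝ) < (q.den : ℝ) := by exact_mod_cast q.pos
  have h2 : |ξ - (q : ℝ)| < 1 / (2 * (q.den : ℝ) ^ 2) := by
    rw [hcast]
    refine lt_of_lt_of_le h ?_
    apply one_div_le_one_div_of_le
    · positivity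
    · nlinarith
  obtain ⟨n, hn⟩ := Real.exists_rat_eq_convergent h2
  refine ⟨n, ?_⟩
  rw [← hcast, hn, conv_eq n ξ hξ]
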